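/- Let Y be a metric space, Z a separable metric space, ψ : Y → Z continuous, γ : [0,1] → Y continuous, and F : [0,1] → [0,∞) Lebesgue integrable. Let E ⊂ Y be compact with H¹_Z(ψ(E)) = 0. Suppose that for every closed interval I ⊆ [0,1] ∖ γ⁻¹(E), the length of ψ∘γ restricted to I satisfies ℓ(ψ∘γ|_I) ≤ ∫_I F dL¹. Then ℓ(ψ∘γ) ≤ ∫_{[0,1]} F dL¹. -/

import Mathlib

open MeasureTheory Set ENNReal NNReal

private lemma hmeas_singleton {Z : Type*} [MetricSpace Z] [MeasurableSpace Z] [BorelSpace Z]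
    (x : Z) : μH[1] ({x} : Set Z) = 0 := by
  haveI := MeasureTheory.Measure.noAtoms_hausdorff Z one_pos
  exact measure_singleton x

/-- The distance between two points in a preconnected set is bounded by its `H¹` measure. -/
private lemma edist_le_hausdorff {Z : Type*} [MetricSpace Z] [MeasurableSpace Z] [BorelSpace Z]
    {C : Set Z} (hC : IsPreconnected C) {x y : Z} (hx : x ∈ C) (hy : y ∈ C) :
    edist x y ≤ μH[1] C := by
  have hf : LipschitzWith 1 (fun z => dist z x) := LipschitzWith.dist_left x
  have h1 : μH[1] ((fun z => dist z x) '' C) ≤ (1 : ℝ≥0) ^ (1 : ℝ) * μH[1] C :=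
    hf.hausdorffMeasure_image_le one_pos.le C
  have h2 : Icc (0:ℝ) (dist y x) ⊆ (fun z => dist z x) '' C := by
    refine (hC.image _ hf.continuous.continuousOn).Icc_subset ⟨x, hx, by simp⟩ ⟨y, hy, rfl⟩
  calc edist x y = ENNReal.ofReal (dist y x) := by rw [edist_comm, edist_dist]
    _ = volume (Icc (0:ℝ) (dist y x)) := by rw [Real.volume_Icc, sub_zero]
    _ = μH[1] (Icc (0:ℝ) (dist y x)) := by rw [MeasureTheory.hausdorffMeasure_real]
    _ ≤ μH[1] ((fun z => dist z x) '' C) := measure_mono h2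
    _ ≤ μH[1] C := by simpa using h1

/-- The `H¹` measure of the image of a set under a map is at most the variation of the map. -/
private lemma hausdorff_image_le_eVariationOn {Z : Type*} [MetricSpace Z] [MeasurableSpace Z]
    [BorelSpace Z] (f : ℝ → Z) (s : Set ℝ) : μH[1] (f '' s) ≤ eVariationOn f s := by
  by_cases hfin : eVariationOn f s = ∞
  · rw [hfin]; exact le_top
  rcases s.eq_empty_or_nonempty with rfl | hne
  · simp
  classical
  set v : ℝ → ℝ := fun x => (eVariationOn f (s ∩ Iic x)).toReal with hv
  have hsub : ∀ t : Set ℝ, t ⊆ s → eVariationOn f t ≠ ∞ :=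
    fun t ht h => hfin (top_le_iff.1 (h ▸ eVariationOn.mono f ht))
  have keyR : ∀ x ∈ s, ∀ y ∈ s, x ≤ y →
      v y - v x = (eVariationOn f (s ∩ Icc x y)).toReal := by
    intro x hx y hy hxy
    have hsplit : s ∩ Iic y = (s ∩ Iic x) ∪ (s ∩ Icc x y) := by
      ext t
      constructor
      · rintro ⟨hts, hty⟩
        rcases le_total t x with h | h
        · exact Or.inl ⟨hts, h⟩
        · exact Or.inr ⟨hts, h, hty⟩
      · rintro (⟨hts, htx⟩ | ⟨hts, _, hty⟩)
        · exact ⟨hts, htx.trans hxy⟩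
        · exact ⟨hts, hty⟩
    have hunion : eVariationOn f (s ∩ Iic y)
        = eVariationOn f (s ∩ Iic x) + eVariationOn f (s ∩ Icc x y) := by
      rw [hsplit]
      exact eVariationOn.union f ⟨⟨hx, Set.mem_Iic.2 le_rfl⟩, fun t ht => ht.2⟩
        ⟨⟨hx, le_rfl, hxy⟩, fun t ht => ht.2.1⟩
    have h1 : eVariationOn f (s ∩ Iic x) ≠ ∞ := hsub _ inter_subset_left
    have h2 : eVariationOn f (s ∩ Icc x y) ≠ ∞ := hsub _ inter_subset_left
    have : v y = v x + (eVariationOn f (s ∩ Icc x y)).toReal := by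
      rw [hv]; simp only [hunion, ENNReal.toReal_add h1 h2]
    rw [this]; ring
  have key : ∀ x ∈ s, ∀ y ∈ s, x ≤ y →
      ENNReal.ofReal (v y - v x) = eVariationOn f (s ∩ Icc x y) := by
    intro x hx y hy hxy
    rw [keyR x hx y hy hxy, ENNReal.ofReal_toReal (hsub _ inter_subset_left)]
  have hmono : ∀ x ∈ s, ∀ y ∈ s, x ≤ y → v x ≤ v y := by
    intro x hx y hy hxy
    have := keyR x hx y hy hxy
    have h0 := ENNReal.toReal_nonneg (a := eVariationOn f (s ∩ Icc x y))
    linarith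
  have habs : ∀ x ∈ s, ∀ y ∈ s,
      ENNReal.ofReal |v y - v x|
        = eVariationOn f (s ∩ Icc (min x y) (max x y)) := by
    intro x hx y hy
    rcases le_total x y with h | h
    · rw [abs_of_nonneg (sub_nonneg.2 (hmono x hx y hy h)), key x hx y hy h,
        min_eq_left h, max_eq_right h]
    · rw [abs_of_nonpos (sub_nonpos.2 (hmono y hy x hx h)), neg_sub, key y hy x hx h,
        min_eq_right h, max_eq_left h]
  have hedist : ∀ x ∈ s, ∀ y ∈ s, edist (f x) (f y) ≤ ENNReal.ofReal |v y - v x| := by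
    intro x hx y hy
    rw [habs x hx y hy]
    rcases le_total x y with h | h
    · rw [min_eq_left h, max_eq_right h]
      exact eVariationOn.edist_le f ⟨hx, le_rfl, h⟩ ⟨hy, h, le_rfl⟩
    · rw [min_eq_right h, max_eq_left h]
      exact eVariationOn.edist_le f ⟨hx, h, le_rfl⟩ ⟨hy, le_rfl, h⟩
  have hvar : ∀ x ∈ s, ∀ y ∈ s, ENNReal.ofReal |v y - v x| ≤ eVariationOn f s := by
    intro x hx y hy
    rw [habs x hx y hy]
    exact eVariationOn.mono f inter_subset_left
  set g : ℝ → Z := fun r => f (Function.invFunOn v s r) with hg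
  have hginv : ∀ x ∈ s, g (v x) = f x := by
    intro x hx
    have hex : ∃ a ∈ s, v a = v x := ⟨x, hx, rfl⟩
    have h1 : Function.invFunOn v s (v x) ∈ s := Function.invFunOn_mem hex
    have h2 : v (Function.invFunOn v s (v x)) = v x := Function.invFunOn_eq hex
    have h3 := hedist _ h1 x hx
    rw [h2, sub_self, abs_zero, ENNReal.ofReal_zero, le_zero_iff, edist_eq_zero] at h3
    exact h3
  have himg : f '' s = g '' (v '' s) := by
    rw [Set.image_image]
    exact Set.image_congr fun a ha => (hginv a ha).symm
  have hlip : LipschitzOnWith 1 g (v '' s) := by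
    rintro r ⟨x, hx, rfl⟩ r' ⟨x', hx', rfl⟩
    rw [hginv x hx, hginv x' hx', ENNReal.coe_one, one_mul]
    calc edist (f x) (f x') ≤ ENNReal.ofReal |v x' - v x| := hedist x hx x' hx'
      _ = edist (v x) (v x') := by rw [edist_dist, Real.dist_eq, abs_sub_comm]
  calc μH[1] (f '' s) = μH[1] (g '' (v '' s)) := by rw [himg]
    _ ≤ (1 : ℝ≥0) ^ (1:ℝ) * μH[1] (v '' s) := hlip.hausdorffMeasure_image_le one_pos.le
    _ = μH[1] (v '' s) := by simp
    _ = volume (v '' s) := by rw [MeasureTheory.hausdorffMeasure_real]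
    _ ≤ EMetric.diam (v '' s) := Real.volume_le_diam _
    _ ≤ eVariationOn f s := by
        refine EMetric.diam_le ?_
        rintro r ⟨x, hx, rfl⟩ r' ⟨x', hx', rfl⟩
        calc edist (v x) (v x') = ENNReal.ofReal |v x' - v x| := by
              rw [edist_dist, Real.dist_eq, abs_sub_comm]
          _ ≤ eVariationOn f s := hvar x hx x' hx'

/-- Let `Y` be a metric space, `Z` a separable metric space,
`ψ : Y → Z` continuous, `γ : [0,1] → Y` continuous and `F : [0,1] → [0,∞)` Lebesgue
integrable.  Let `E ⊂ Y` be compact with `H¹_Z(ψ(E)) = 0`.  If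
`ℓ(ψ∘γ|_I) ≤ ∫_I F dL¹` for every closed interval `I ⊆ [0,1] ∖ γ⁻¹(E)`, then
`ℓ(ψ∘γ) ≤ ∫_{[0,1]} F dL¹`. -/
theorem statement19 {Y Z : Type*} [MetricSpace Y] [MetricSpace Z]
    [TopologicalSpace.SeparableSpace Z] [MeasurableSpace Z] [BorelSpace Z]
    (ψ : Y → Z) (hψ : Continuous ψ)
    (γ : ℝ → Y) (hγ : ContinuousOn γ (Set.Icc 0 1))
    (F : ℝ → ℝ) (hF : IntegrableOn F (Set.Icc 0 1)) (hF0 : ∀ t ∈ Set.Icc (0:ℝ) 1, 0 ≤ F t)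
    (E : Set Y) (hE : IsCompact E) (hHE : μH[1] (ψ '' E) = 0)
    (hseg : ∀ a b : ℝ, Set.Icc a b ⊆ Set.Icc 0 1 \ (γ ⁻¹' E) →
      eVariationOn (ψ ∘ γ) (Set.Icc a b) ≤ ENNReal.ofReal (∫ t in Set.Icc a b, F t)) :
    eVariationOn (ψ ∘ γ) (Set.Icc 0 1) ≤ ENNReal.ofReal (∫ t in Set.Icc 0 1, F t) := by
  classical
  set θ : ℝ → Z := ψ ∘ γ with hθdef
  have hθcont : ContinuousOn θ (Icc 0 1) := hψ.comp_continuousOn hγ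
  set G : ℝ → ℝ≥0∞ := fun t => ENNReal.ofReal (F t) with hGdef
  have hconv : ∀ m M : ℝ, Icc m M ⊆ Icc 0 1 →
      ENNReal.ofReal (∫ t in Icc m M, F t) = ∫⁻ t in Icc m M, G t := by
    intro m M hs
    refine MeasureTheory.ofReal_integral_eq_lintegral_ofReal (hF.mono_set hs) ?_
    exact (ae_restrict_iff' measurableSet_Icc).2 (ae_of_all _ fun x hx => hF0 x (hs hx))
  set K : Set ℝ := Icc 0 1 ∩ γ ⁻¹' E with hKdef
  have hKclosed : IsClosed K := hγ.preimage_isClosed_of_isClosed isClosed_Icc hE.isClosed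
  set V : Set ℝ := Ioo 0 1 \ K with hVdef
  have hVopen : IsOpen V := isOpen_Ioo.sdiff hKclosed
  have hV01 : V ⊆ Icc 0 1 := fun x hx => Ioo_subset_Icc_self hx.1
  have hVE : V ⊆ Icc 0 1 \ γ ⁻¹' E := fun x hx =>
    ⟨Ioo_subset_Icc_self hx.1, fun hmem => hx.2 ⟨Ioo_subset_Icc_self hx.1, hmem⟩⟩
  -- variation bound on open intervals inside `V`
  have hIoo : ∀ a b : ℝ, Ioo a b ⊆ V → eVariationOn θ (Ioo a b) ≤ ∫⁻ t in Ioo a b, G t := by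
    intro a b hsubV
    refine iSup_le ?_
    rintro ⟨n, u, hu, hus⟩
    have hIccIoo : Icc (u 0) (u n) ⊆ Ioo a b := fun x hx =>
      ⟨lt_of_lt_of_le (hus 0).1 hx.1, lt_of_le_of_lt hx.2 (hus n).2⟩
    have hsum : ∑ i ∈ Finset.range n, edist (θ (u (i+1))) (θ (u i))
        ≤ eVariationOn θ (Icc (u 0) (u n)) := by
      have hu' : Monotone (fun i => u (min i n)) := fun i j hij => hu (min_le_min_right n hij)
      have hmem : ∀ i, u (min i n) ∈ Icc (u 0) (u n) :=
        fun i => ⟨hu (Nat.zero_le _), hu (min_le_right _ _)⟩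
      have hle := eVariationOn.sum_le (f := θ) (n := n) hu' hmem
      refine le_trans (le_of_eq ?_) hle
      refine Finset.sum_congr rfl fun i hi => ?_
      have hi' : i < n := Finset.mem_range.1 hi
      rw [min_eq_left hi'.le, min_eq_left (Nat.succ_le_of_lt hi')]
    refine hsum.trans ?_
    have h1 : Icc (u 0) (u n) ⊆ Icc 0 1 \ γ ⁻¹' E := fun x hx => hVE (hsubV (hIccIoo hx))
    refine (hseg _ _ h1).trans ?_
    rw [hconv _ _ (fun x hx => (h1 hx).1)]
    exact lintegral_mono_set hIccIoo
  -- Hausdorff measure bound on open subsets of `V`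
  have hopen : ∀ W : Set ℝ, IsOpen W → W ⊆ V → μH[1] (θ '' W) ≤ ∫⁻ t in W, G t := by
    intro W hWopen hWV
    have hW01 : W ⊆ Icc 0 1 := fun x hx => hV01 (hWV hx)
    set A : ℝ → ℝ := fun r => sSup (Wᶜ ∩ Iic r) with hAdef
    set B : ℝ → ℝ := fun r => sInf (Wᶜ ∩ Ici r) with hBdef
    have hAne : ∀ r ∈ W, (Wᶜ ∩ Iic r).Nonempty := by
      intro r hr
      refine ⟨-1, fun h => ?_, ?_⟩
      · have := (hW01 h).1; norm_num at this
      · have := (hW01 hr).1; simp only [mem_Iic]; linarith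
    have hBne : ∀ r ∈ W, (Wᶜ ∩ Ici r).Nonempty := by
      intro r hr
      refine ⟨2, fun h => ?_, ?_⟩
      · have := (hW01 h).2; norm_num at this
      · have := (hW01 hr).2; simp only [mem_Ici]; linarith
    have hAbdd : ∀ r : ℝ, BddAbove (Wᶜ ∩ Iic r) := fun r => ⟨r, fun x hx => hx.2⟩
    have hBbdd : ∀ r : ℝ, BddBelow (Wᶜ ∩ Ici r) := fun r => ⟨r, fun x hx => hx.2⟩
    have hAmem : ∀ r ∈ W, A r ∈ Wᶜ ∧ A r ≤ r := fun r hr =>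
      (hWopen.isClosed_compl.inter isClosed_Iic).csSup_mem (hAne r hr) (hAbdd r)
    have hBmem : ∀ r ∈ W, B r ∈ Wᶜ ∧ r ≤ B r := fun r hr =>
      (hWopen.isClosed_compl.inter isClosed_Ici).csInf_mem (hBne r hr) (hBbdd r)
    have hIooW : ∀ r ∈ W, Ioo (A r) (B r) ⊆ W := by
      intro r hr x hx
      by_contra hxW
      rcases le_total x r with h | h
      · exact absurd (le_csSup (hAbdd r) ⟨hxW, h⟩) (not_le.2 hx.1)
      · exact absurd (csInf_le (hBbdd r) ⟨hxW, h⟩) (not_le.2 hx.2)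
    have hcover : ∀ x ∈ W, ∃ q : ℚ, (q:ℝ) ∈ W ∧ x ∈ Ioo (A q) (B q) := by
      intro x hx
      obtain ⟨ε, hε, hball⟩ := Metric.isOpen_iff.1 hWopen x hx
      rw [Real.ball_eq_Ioo] at hball
      obtain ⟨q, hq1, hq2⟩ := exists_rat_btwn (show x - ε < x + ε by linarith)
      have hqW : (q:ℝ) ∈ W := hball ⟨hq1, hq2⟩
      have hA : A q ≤ x - ε := by
        refine csSup_le (hAne _ hqW) ?_
        intro y hy
        by_contra hlt
        push_neg at hlt
        exact hy.1 (hball ⟨hlt, lt_of_le_of_lt hy.2 hq2⟩)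
      have hB : x + ε ≤ B q := by
        refine le_csInf (hBne _ hqW) ?_
        intro y hy
        by_contra hlt
        push_neg at hlt
        exact hy.1 (hball ⟨lt_of_lt_of_le (by linarith) hy.2, hlt⟩)
      exact ⟨q, hqW, by linarith, by linarith⟩
    have heq : ∀ q : ℚ, ∀ q' : ℚ, (q:ℝ) ∈ W → (q':ℝ) ∈ W →
        (Ioo (A q) (B q) ∩ Ioo (A q') (B q')).Nonempty →
          A (q:ℝ) = A (q':ℝ) ∧ B (q:ℝ) = B (q':ℝ) := by
      have hAle : ∀ q : ℚ, ∀ q' : ℚ, (q:ℝ) ∈ W → (q':ℝ) ∈ W →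
          (Ioo (A q) (B q) ∩ Ioo (A q') (B q')).Nonempty →
            A (q':ℝ) ≤ A (q:ℝ) ∧ B (q:ℝ) ≤ B (q':ℝ) := by
        rintro q q' hq hq' ⟨x, hx1, hx2⟩
        constructor
        · by_contra hlt
          push_neg at hlt
          exact (hAmem _ hq').1 (hIooW _ hq ⟨hlt, lt_trans hx2.1 hx1.2⟩)
        · by_contra hlt
          push_neg at hlt
          exact (hBmem _ hq').1 (hIooW _ hq ⟨lt_trans hx1.1 hx2.2, hlt⟩)
      intro q q' hq hq' hne
      have h1 := hAle q q' hq hq' hne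
      have h2 := hAle q' q hq' hq (by rwa [inter_comm] at hne)
      exact ⟨le_antisymm h2.1 h1.1, le_antisymm h1.2 h2.2⟩
    set T : Set (ℝ × ℝ) := (fun q : ℚ => ((A q, B q) : ℝ × ℝ)) '' {q : ℚ | (q:ℝ) ∈ W} with hT
    have hTc : T.Countable := (Set.to_countable _).image _
    haveI := hTc.to_subtype
    have hIooWT : ∀ p : T, Ioo (p : ℝ × ℝ).1 (p : ℝ × ℝ).2 ⊆ W := by
      rintro ⟨p, q, hqW, rfl⟩
      exact hIooW _ hqW
    have hWU : W = ⋃ p : T, Ioo (p : ℝ × ℝ).1 (p : ℝ × ℝ).2 := by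
      apply Subset.antisymm
      · intro x hx
        obtain ⟨q, hqW, hq⟩ := hcover x hx
        exact mem_iUnion.2 ⟨⟨(A q, B q), ⟨q, hqW, rfl⟩⟩, hq⟩
      · exact iUnion_subset hIooWT
    have hdisj : Pairwise (Function.onFun Disjoint fun p : T => Ioo (p : ℝ × ℝ).1 (p : ℝ × ℝ).2) := by
      rintro ⟨p, q, hqW, rfl⟩ ⟨p', q', hq'W, rfl⟩ hne
      simp only [Function.onFun]
      rw [Set.disjoint_iff_inter_eq_empty]
      by_contra hne'
      have hinter : (Ioo (A q) (B q) ∩ Ioo (A q') (B q')).Nonempty :=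
        nonempty_iff_ne_empty.2 hne'
      obtain ⟨h1, h2⟩ := heq q q' hqW hq'W hinter
      exact hne (Subtype.ext (Prod.ext h1 h2))
    calc μH[1] (θ '' W) = μH[1] (⋃ p : T, θ '' Ioo (p : ℝ × ℝ).1 (p : ℝ × ℝ).2) := by
          rw [hWU, image_iUnion]
      _ ≤ ∑' p : T, μH[1] (θ '' Ioo (p : ℝ × ℝ).1 (p : ℝ × ℝ).2) := measure_iUnion_le _
      _ ≤ ∑' p : T, ∫⁻ t in Ioo (p : ℝ × ℝ).1 (p : ℝ × ℝ).2, G t := by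
          refine ENNReal.tsum_le_tsum fun p => ?_
          exact (hausdorff_image_le_eVariationOn θ _).trans
            (hIoo _ _ fun x hx => hWV (hIooWT p hx))
      _ = ∫⁻ t in W, G t := by
          rw [hWU, Measure.restrict_iUnion hdisj fun p => measurableSet_Ioo,
            lintegral_sum_measure]
  -- main argument
  rw [hconv 0 1 subset_rfl]
  refine iSup_le ?_
  rintro ⟨n, u, hu, hus⟩
  set Wi : ℕ → Set ℝ := fun i => if i < n then V ∩ Ioo (u i) (u (i+1)) else ∅ with hWidef
  have hWiopen : ∀ i, IsOpen (Wi i) := by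
    intro i
    by_cases hi : i < n <;> simp only [hWidef, hi, if_true, if_false]
    · exact hVopen.inter isOpen_Ioo
    · exact isOpen_empty
  have hWiV : ∀ i, Wi i ⊆ V := by
    intro i
    by_cases hi : i < n <;> simp only [hWidef, hi, if_true, if_false]
    · exact inter_subset_left
    · exact empty_subset _
  have hWisub : ∀ i, Wi i ⊆ Ioo (u i) (u (i+1)) := by
    intro i
    by_cases hi : i < n <;> simp only [hWidef, hi, if_true, if_false]
    · exact inter_subset_right
    · exact empty_subset _
  have hWimeas : ∀ i, MeasurableSet (Wi i) := fun i => (hWiopen i).measurableSet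
  have haux : ∀ i j, i < j → Disjoint (Wi i) (Wi j) := by
    intro i j hij
    rw [Set.disjoint_left]
    intro x hxi hxj
    exact absurd ((hWisub i hxi).2.trans_le (hu (Nat.succ_le_of_lt hij)))
      (not_lt.2 (hWisub j hxj).1.le)
  have hdisjW : Pairwise (Function.onFun Disjoint Wi) := fun i j hne =>
    hne.lt_or_gt.elim (haux i j) fun h => (haux j i h).symm
  haveI := MeasureTheory.Measure.noAtoms_hausdorff Z one_pos
  have hstep : ∀ i < n, edist (θ (u (i+1))) (θ (u i)) ≤ μH[1] (θ '' Wi i) := by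
    intro i hi
    have hIsub : Icc (u i) (u (i+1)) ⊆ Icc 0 1 := fun x hx =>
      ⟨(hus i).1.trans hx.1, hx.2.trans (hus (i+1)).2⟩
    have hconn : IsPreconnected (θ '' Icc (u i) (u (i+1))) :=
      isPreconnected_Icc.image θ (hθcont.mono hIsub)
    have h1 : edist (θ (u (i+1))) (θ (u i)) ≤ μH[1] (θ '' Icc (u i) (u (i+1))) :=
      edist_le_hausdorff hconn ⟨u (i+1), ⟨hu (Nat.le_succ i), le_rfl⟩, rfl⟩
        ⟨u i, ⟨le_rfl, hu (Nat.le_succ i)⟩, rfl⟩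
    refine h1.trans ?_
    have hsubset : θ '' Icc (u i) (u (i+1)) ⊆
        θ '' Wi i ∪ (ψ '' E ∪ ({θ (u i), θ (u (i+1)), θ 0, θ 1} : Set Z)) := by
      rintro z ⟨x, hx, rfl⟩
      by_cases hxW : x ∈ Wi i
      · exact Or.inl ⟨x, hxW, rfl⟩
      right
      rcases eq_or_lt_of_le hx.1 with h | h
      · exact Or.inr (by rw [← h]; simp)
      rcases eq_or_lt_of_le hx.2 with h' | h'
      · exact Or.inr (by rw [h']; simp)
      have hxV : x ∉ V := fun hv => hxW (by simp only [hWidef, hi, if_true]; exact ⟨hv, h, h'⟩)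
      by_cases hx01 : x ∈ Ioo (0:ℝ) 1
      · have hxK : x ∈ K := by_contra fun hk => hxV ⟨hx01, hk⟩
        exact Or.inl ⟨γ x, hxK.2, rfl⟩
      · have h0 := (hIsub hx).1
        have h1' := (hIsub hx).2
        have : x = 0 ∨ x = 1 := by
          rcases eq_or_lt_of_le h0 with h0' | h0'
          · exact Or.inl h0'.symm
          rcases eq_or_lt_of_le h1' with h1'' | h1''
          · exact Or.inr h1''
          · exact absurd ⟨h0', h1''⟩ hx01
        rcases this with h | h
        · exact Or.inr (by rw [h]; simp)
        · exact Or.inr (by rw [h]; simp)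
    refine (measure_mono hsubset).trans ?_
    refine (measure_union_le _ _).trans ?_
    have hnull : μH[1] (ψ '' E ∪ ({θ (u i), θ (u (i+1)), θ 0, θ 1} : Set Z)) = 0 :=
      measure_union_null hHE ((Set.toFinite _).countable.measure_zero _)
    rw [hnull, add_zero]
  calc ∑ i ∈ Finset.range n, edist (θ (u (i+1))) (θ (u i))
      ≤ ∑ i ∈ Finset.range n, ∫⁻ t in Wi i, G t := by
        refine Finset.sum_le_sum fun i hi => ?_
        exact (hstep i (Finset.mem_range.1 hi)).trans (hopen _ (hWiopen i) (hWiV i))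
    _ ≤ ∑' i, ∫⁻ t in Wi i, G t := ENNReal.sum_le_tsum _
    _ = ∫⁻ t in ⋃ i, Wi i, G t := by
        rw [Measure.restrict_iUnion hdisjW hWimeas, lintegral_sum_measure]
    _ ≤ ∫⁻ t in Icc 0 1, G t :=
        lintegral_mono_set (iUnion_subset fun i => (hWiV i).trans hV01)
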